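/- arXiv:2505.07727 — 2 statements merged into one kernel-verified Lean document; each statement's English description precedes it below -/
import Mathlib

section
/- Let G be a graph on n vertices with independence number α(G) ≤ 2, and let x, y be vertices of G. If xy is not an edge of G, the vertex y is adjacent to every vertex of N(x), and oh(G \ {x, y}) ≥ ⌈n/2⌉ − 1, then oh(G) ≥ ⌈n/2⌉. -/
open SimpleGraph

/-- The spanning subgraph of `G` consisting of the edges that are bichromatic
(i.e. whose two endpoints receive different colors) under the 2-coloring `c`. -/
def SimpleGraph.bichromaticSubgraph {V : Type*} (G : SimpleGraph V) (c : V → Bool) :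
    SimpleGraph V where
  Adj u v := G.Adj u v ∧ c u ≠ c v
  symm := ⟨fun u v h => ⟨h.1.symm, h.2.symm⟩⟩
  loopless := ⟨fun v h => h.2 rfl⟩

/-- `G` contains an odd `K t` minor: there are `t` pairwise disjoint nonempty branch sets
and a 2-coloring of the vertices such that each branch set induces a connected subgraph
using only bichromatic edges (so it carries a spanning tree all of whose edges are
bichromatic), and every two branch sets are joined by a monochromatic edge of `G`. -/
def SimpleGraph.HasOddKMinor {V : Type*} (G : SimpleGraph V) (t : ℕ) : Prop :=
  ∃ (c : V → Bool) (B : Fin t → Set V),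
    (∀ i, (B i).Nonempty) ∧
    (Pairwise fun i j => Disjoint (B i) (B j)) ∧
    (∀ i, ((G.bichromaticSubgraph c).induce (B i)).Connected) ∧
    (∀ i j, i ≠ j → ∃ u ∈ B i, ∃ v ∈ B j, G.Adj u v ∧ c u = c v)

/-- `oh G` is the largest `t` such that `G` contains an odd `K t` minor. -/
noncomputable def SimpleGraph.oh {V : Type*} (G : SimpleGraph V) : ℕ :=
  sSup {t | G.HasOddKMinor t}

/-- The independence number of `G`. -/
noncomputable def SimpleGraph.indepNum' {V : Type*} (G : SimpleGraph V) : ℕ :=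
  Gᶜ.cliqueNum

/-- The join of two vertex-disjoint graphs: take the disjoint union and add all
edges between the two parts. -/
def SimpleGraph.joinG {α β : Type*} (G : SimpleGraph α) (H : SimpleGraph β) :
    SimpleGraph (α ⊕ β) where
  Adj u v := match u, v with
    | Sum.inl a, Sum.inl b => G.Adj a b
    | Sum.inr a, Sum.inr b => H.Adj a b
    | _, _ => True
  symm := ⟨by rintro (a | a) (b | b) h <;> first | exact h.symm | trivial⟩
  loopless := ⟨by rintro (a | a) h <;> exact h.ne rfl⟩

lemma hasOddKMinor_bddAbove {V : Type*} [Finite V] (G : SimpleGraph V) :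
    BddAbove {t | G.HasOddKMinor t} := by
  refine ⟨Nat.card V, fun t ht => ?_⟩
  obtain ⟨c, B, hBne, hBdisj, -, -⟩ := ht
  choose f hf using hBne
  have hinj : Function.Injective f := by
    intro i j hij
    by_contra h
    exact Set.disjoint_left.mp (hBdisj h) (hf i) (hij ▸ hf j)
  calc t = Nat.card (Fin t) := by simp
    _ ≤ Nat.card V := Nat.card_le_card_of_injective f hinj

lemma hasOddKMinor_zero {V : Type*} (G : SimpleGraph V) : G.HasOddKMinor 0 :=
  ⟨fun _ => true, fun i => i.elim0, fun i => i.elim0, fun i => i.elim0,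
    fun i => i.elim0, fun i => i.elim0⟩

theorem statement10 {V : Type*} [Fintype V] (G : SimpleGraph V)
    (hα : G.indepNum' ≤ 2) (x y : V) (hne : x ≠ y) (hxy : ¬ G.Adj x y)
    (hy : ∀ z, G.Adj x z → G.Adj y z)
    (hoh : (Fintype.card V + 1) / 2 - 1 ≤ (G.induce ({x, y}ᶜ : Set V)).oh) :
    (Fintype.card V + 1) / 2 ≤ G.oh := by
  classical
  set S : Set V := ({x, y}ᶜ : Set V) with hS
  set H : SimpleGraph S := G.induce S with hH
  -- y is adjacent to every vertex other than x and y
  have hyadj : ∀ z : V, z ≠ x → z ≠ y → G.Adj y z := by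
    intro z hzx hzy
    by_cases hx : G.Adj x z
    · exact hy z hx
    by_contra hyz
    have hclq : Gᶜ.IsClique (({x, y, z} : Finset V) : Set V) := by
      intro a ha b hb hab
      simp only [Finset.coe_insert, Set.mem_insert_iff, Finset.coe_singleton,
        Set.mem_singleton_iff] at ha hb
      rw [compl_adj]
      have h1 : ¬ G.Adj y x := fun h => hxy h.symm
      have h2 : ¬ G.Adj z x := fun h => hx h.symm
      have h3 : ¬ G.Adj z y := fun h => hyz h.symm
      rcases ha with rfl | rfl | rfl <;> rcases hb with rfl | rfl | rfl <;>
        simp_all [eq_comm]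
    have hcard : ({x, y, z} : Finset V).card = 3 := by
      rw [Finset.card_insert_of_notMem (by simp [hne, Ne.symm hzx]),
        Finset.card_insert_of_notMem (by simp [Ne.symm hzy]), Finset.card_singleton]
    have := hclq.card_le_cliqueNum
    rw [hcard] at this
    have : (3 : ℕ) ≤ G.indepNum' := this
    omega
  -- extract an optimal odd minor of the induced graph
  have h0 : (0 : ℕ) ∈ {t | H.HasOddKMinor t} := hasOddKMinor_zero H
  have hmem : H.HasOddKMinor H.oh :=
    Nat.sSup_mem ⟨0, h0⟩ (hasOddKMinor_bddAbove H)
  set t0 := H.oh with ht0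
  obtain ⟨c', B', hBne, hBdisj, hBconn, hBjoin⟩ := hmem
  -- choose the color b
  have hb : ∃ b : Bool, ∀ i, ∃ u ∈ B' i, c' u = b := by
    by_contra h
    push_neg at h
    obtain ⟨i, hi⟩ := h true
    obtain ⟨j, hj⟩ := h false
    by_cases hij : i = j
    · subst hij
      obtain ⟨u, hu⟩ := hBne i
      have h1 := hi u hu
      have h2 := hj u hu
      cases hc : c' u <;> simp_all
    · obtain ⟨u, hu, v, hv, hadj, hc⟩ := hBjoin i j hij
      have h1 := hi u hu
      have h2 := hj v hv
      cases hcu : c' u <;> simp_all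
  obtain ⟨b, hb⟩ := hb
  -- the new coloring and branch sets
  set c : V → Bool := fun v => if h : v ∈ S then c' ⟨v, h⟩ else b with hc
  have hcS : ∀ w : S, c w.1 = c' w := fun w => dif_pos w.2
  have hcy : c y = b := dif_neg (by simp [hS])
  set B : Fin (t0 + 1) → Set V :=
    Fin.snoc (fun i => Subtype.val '' B' i) ({y} : Set V) with hB
  have hBcast : ∀ i : Fin t0, B i.castSucc = Subtype.val '' B' i := by
    intro i; simp [hB, Fin.snoc_castSucc]
  have hBlast : B (Fin.last t0) = ({y} : Set V) := by simp [hB, Fin.snoc_last]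
  have hminor : G.HasOddKMinor (t0 + 1) := by
    refine ⟨c, B, ?_, ?_, ?_, ?_⟩
    · -- nonempty
      intro i
      induction i using Fin.lastCases with
      | last => rw [hBlast]; exact ⟨y, rfl⟩
      | cast i =>
        rw [hBcast]
        obtain ⟨u, hu⟩ := hBne i
        exact ⟨u.1, u, hu, rfl⟩
    · -- pairwise disjoint
      intro i j hij
      rcases Fin.eq_castSucc_or_eq_last i with ⟨i', rfl⟩ | rfl <;>
        rcases Fin.eq_castSucc_or_eq_last j with ⟨j', rfl⟩ | rfl
      · rw [hBcast, hBcast, Set.disjoint_image_iff Subtype.val_injective]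
        exact hBdisj (fun h => hij (congrArg Fin.castSucc h))
      · rw [hBlast, hBcast, Set.disjoint_singleton_right]
        rintro ⟨u, -, huy⟩
        have := u.2
        simp [hS, huy] at this
      · rw [hBlast, hBcast, Set.disjoint_singleton_left]
        rintro ⟨u, -, huy⟩
        have := u.2
        simp [hS, huy] at this
      · exact absurd rfl hij
    · -- connected
      intro i
      induction i using Fin.lastCases with
      | last =>
        rw [hBlast]
        rw [connected_iff]
        constructor
        · intro a b'
          have : a = b' := Subtype.ext (a.2.trans b'.2.symm)
          rw [this]
        · exact ⟨⟨y, rfl⟩⟩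
      | cast i =>
        rw [hBcast]
        have hiso : ((H.bichromaticSubgraph c').induce (B' i)) ≃g
            ((G.bichromaticSubgraph c).induce (Subtype.val '' B' i)) := by
          refine ⟨Equiv.Set.image Subtype.val (B' i) Subtype.val_injective, ?_⟩
          intro u v
          simp only [comap_adj, Equiv.Set.image_apply]
          show (G.Adj u.1.1 v.1.1 ∧ c u.1.1 ≠ c v.1.1) ↔
            (G.Adj u.1.1 v.1.1 ∧ c' u.1 ≠ c' v.1)
          rw [hcS u.1, hcS v.1]
        exact hiso.connected_iff.mp (hBconn i)
    · -- joining edges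
      intro i j hij
      rcases Fin.eq_castSucc_or_eq_last i with ⟨i', rfl⟩ | rfl <;>
        rcases Fin.eq_castSucc_or_eq_last j with ⟨j', rfl⟩ | rfl
      · have hij' : i' ≠ j' := fun h => hij (congrArg Fin.castSucc h)
        obtain ⟨u, hu, v, hv, hadj, hcuv⟩ := hBjoin i' j' hij'
        refine ⟨u.1, by rw [hBcast]; exact ⟨u, hu, rfl⟩,
          v.1, by rw [hBcast]; exact ⟨v, hv, rfl⟩, hadj, ?_⟩
        rw [hcS u, hcS v, hcuv]
      · obtain ⟨u, hu, hub⟩ := hb i'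
        have hux : u.1 ≠ x := fun h => u.2 (by simp [hS, h])
        have huy : u.1 ≠ y := fun h => u.2 (by simp [hS, h])
        refine ⟨u.1, by rw [hBcast]; exact ⟨u, hu, rfl⟩, y, by rw [hBlast]; rfl, ?_, ?_⟩
        · exact (hyadj u.1 hux huy).symm
        · rw [hcy, hcS u, hub]
      · obtain ⟨u, hu, hub⟩ := hb j'
        have hux : u.1 ≠ x := fun h => u.2 (by simp [hS, h])
        have huy : u.1 ≠ y := fun h => u.2 (by simp [hS, h])
        refine ⟨y, by rw [hBlast]; rfl, u.1, by rw [hBcast]; exact ⟨u, hu, rfl⟩, ?_, ?_⟩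
        · exact hyadj u.1 hux huy
        · rw [hcy, hcS u, hub]
      · exact absurd rfl hij
  have hle : t0 + 1 ≤ G.oh :=
    le_csSup (hasOddKMinor_bddAbove G) hminor
  have hn : 1 ≤ Fintype.card V := Fintype.card_pos_iff.mpr ⟨x⟩
  omega
end

section
/- Let G be a graph on n vertices with independence number α(G) ≤ 2 such that oh(G) < ⌈n/2⌉, and such that every proper induced subgraph G′ of G satisfies oh(G′) ≥ ⌈|G′|/2⌉. Then n is odd. -/
open SimpleGraph

lemma hasOddKMinor_le_card {V : Type*} [Fintype V] (G : SimpleGraph V) {t : ℕ}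
    (h : G.HasOddKMinor t) : t ≤ Fintype.card V := by
  obtain ⟨c, B, hne, hdisj, -, -⟩ := h
  choose f hf using hne
  have hinj : Function.Injective f := by
    intro i j hij
    by_contra hne'
    exact (hdisj hne').ne_of_mem (hf i) (hij ▸ hf j) rfl
  simpa using Fintype.card_le_of_injective f hinj

lemma hasOddKMinor_induce {V : Type*} (G : SimpleGraph V) (s : Set V) {t : ℕ}
    (h : (G.induce s).HasOddKMinor t) : G.HasOddKMinor t := by
  classical
  obtain ⟨c, B, hne, hdisj, hconn, hjoin⟩ := h
  refine ⟨fun v => if h : v ∈ s then c ⟨v, h⟩ else false,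
    fun i => Subtype.val '' B i, fun i => (hne i).image _, ?_, ?_, ?_⟩
  · intro i j hij
    exact (Set.disjoint_image_iff Subtype.val_injective).mpr (hdisj hij)
  · intro i
    have e : ((G.induce s).bichromaticSubgraph c).induce (B i) ≃g
        (G.bichromaticSubgraph fun v => if h : v ∈ s then c ⟨v, h⟩ else false).induce
          (Subtype.val '' B i) := by
      refine ⟨Equiv.Set.image Subtype.val (B i) Subtype.val_injective, ?_⟩
      rintro ⟨⟨x, hx⟩, hx'⟩ ⟨⟨y, hy⟩, hy'⟩
      simp [SimpleGraph.bichromaticSubgraph, Equiv.Set.image, Equiv.Set.imageOfInjOn, hx, hy]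
    exact e.connected_iff.mp (hconn i)
  · intro i j hij
    obtain ⟨u, hu, v, hv, huv, hcol⟩ := hjoin i j hij
    refine ⟨u, Set.mem_image_of_mem _ hu, v, Set.mem_image_of_mem _ hv, huv, ?_⟩
    simp [u.2, v.2, hcol]

lemma oh_induce_le {V : Type*} [Fintype V] (G : SimpleGraph V) (s : Set V) :
    (G.induce s).oh ≤ G.oh := by
  refine csSup_le_csSup ⟨Fintype.card V, fun t ht => hasOddKMinor_le_card G ht⟩
    ⟨0, hasOddKMinor_zero _⟩ (fun t ht => hasOddKMinor_induce G s ht)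

theorem statement14 {V : Type*} [Fintype V] (G : SimpleGraph V)
    (hα : G.indepNum' ≤ 2) (hoh : G.oh < (Fintype.card V + 1) / 2)
    (hmin : ∀ s : Finset V, s ≠ Finset.univ →
      (s.card + 1) / 2 ≤ (G.induce (s : Set V)).oh) :
    Odd (Fintype.card V) := by
  classical
  by_contra hodd
  rw [Nat.not_odd_iff_even] at hodd
  have hn0 : Fintype.card V ≠ 0 := by
    intro h
    rw [h] at hoh
    exact Nat.not_lt_zero _ hoh
  obtain ⟨v⟩ : Nonempty V := Fintype.card_pos_iff.mp (Nat.pos_of_ne_zero hn0)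
  set s : Finset V := Finset.univ.erase v with hs
  have hsne : s ≠ Finset.univ := by
    intro h
    have hv : v ∈ s := h ▸ Finset.mem_univ v
    simp [hs] at hv
  have hcard : s.card = Fintype.card V - 1 := by
    simp [hs, Finset.card_erase_of_mem, Finset.card_univ]
  have h1 := hmin s hsne
  have h2 := oh_induce_le G (s : Set V)
  have h3 : (s.card + 1) / 2 = Fintype.card V / 2 := by
    rw [hcard, Nat.sub_add_cancel (Nat.pos_of_ne_zero hn0)]
  have h4 : (Fintype.card V + 1) / 2 = Fintype.card V / 2 := by
    obtain ⟨k, hk⟩ := hodd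
    omega
  omega
end
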